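/- For natural numbers m ≥ 1 and ℓ ≥ 1: ∑_{i=0}^{⌊(mℓ−1)/(ℓ+1)⌋} (−1)^i · C(m, i) · C(m + mℓ − i(ℓ+1) − 2, mℓ − i(ℓ+1) − 1) = m, as an identity in ℤ. -/

import Mathlib

open Finset Polynomial PowerSeries

/-- geometric polynomial coefficient -/
lemma geomP_coeff (L i : ℕ) :
    (∑ k ∈ range L, (Polynomial.X : ℤ[X]) ^ k).coeff i = if i < L then 1 else 0 := by
  rw [Polynomial.finset_sum_coeff]
  simp only [Polynomial.coeff_X_pow]
  rw [Finset.sum_ite_eq]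
  simp

lemma geomP_natDegree (L : ℕ) :
    (∑ k ∈ range (L+1), (Polynomial.X : ℤ[X]) ^ k).natDegree ≤ L := by
  rw [Polynomial.natDegree_le_iff_coeff_eq_zero]
  intro i hi
  rw [geomP_coeff]
  simp [Nat.lt_succ] at hi ⊢
  omega

lemma geomP_reflect (L : ℕ) :
    (∑ k ∈ range (L+1), (Polynomial.X : ℤ[X]) ^ k).reflect L
      = ∑ k ∈ range (L+1), (Polynomial.X : ℤ[X]) ^ k := by
  ext i
  rw [Polynomial.coeff_reflect, geomP_coeff, geomP_coeff]
  simp only [← Polynomial.revAtFun_eq, Polynomial.revAtFun]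
  split_ifs with h1 h2 h3 <;> omega

lemma reflect_pow_self (f : ℤ[X]) (N : ℕ) (hd : f.natDegree ≤ N) (hf : f.reflect N = f)
    (k : ℕ) : (f ^ k).reflect (N * k) = f ^ k := by
  induction k with
  | zero => simpa using Polynomial.reflect_C (1 : ℤ) 0
  | succ k ih =>
      have h1 : (f ^ k).natDegree ≤ N * k :=
        (Polynomial.natDegree_pow_le).trans (by calc k * f.natDegree ≤ k * N := Nat.mul_le_mul_left k hd
          _ = N * k := Nat.mul_comm k N)
      have : (f * f ^ k).reflect (N + N * k) = f.reflect N * (f ^ k).reflect (N * k) :=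
        Polynomial.reflect_mul f (f ^ k) hd h1
      rw [pow_succ f k, mul_comm (f^k) f, Nat.mul_succ, Nat.add_comm (N*k) N, this, hf, ih,
        mul_comm]

lemma geomP_pow_coeff_one (L m : ℕ) (hL : 1 ≤ L) (hm : 1 ≤ m) :
    ((∑ k ∈ range (L+1), (Polynomial.X : ℤ[X]) ^ k) ^ m).coeff 1 = m := by
  set P := ∑ k ∈ range (L+1), (Polynomial.X : ℤ[X]) ^ k with hP
  have h0 : P.eval 0 = 1 := by
    rw [hP, Polynomial.eval_finset_sum]
    simp [zero_pow_eq]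
  have hc1 : P.coeff 1 = 1 := by
    rw [hP, geomP_coeff]
    simp [Nat.lt_succ]; omega
  have hd : (Polynomial.derivative (P ^ m)).coeff 0 = (P ^ m).coeff 1 := by
    rw [Polynomial.coeff_derivative]; simp
  have hd0 : (Polynomial.derivative P).eval 0 = 1 := by
    rw [← Polynomial.coeff_zero_eq_eval_zero, Polynomial.coeff_derivative, hc1]; simp
  rw [← hd, Polynomial.derivative_pow, Polynomial.coeff_zero_eq_eval_zero]
  simp [h0, hd0]

lemma geomP_pow_coeff_top (L m : ℕ) (hL : 1 ≤ L) (hm : 1 ≤ m) :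
    ((∑ k ∈ range (L+1), (Polynomial.X : ℤ[X]) ^ k) ^ m).coeff (m * L - 1) = m := by
  set P := ∑ k ∈ range (L+1), (Polynomial.X : ℤ[X]) ^ k with hP
  have hc : L * m = m * L := Nat.mul_comm L m
  have hmL : 1 ≤ m * L := Nat.mul_le_mul hm hL
  have hrefl := reflect_pow_self P L (geomP_natDegree L) (geomP_reflect L) m
  have h1 : (P ^ m).coeff (m * L - 1) = (P ^ m).coeff (Polynomial.revAt (L * m) (m * L - 1)) := by
    conv_lhs => rw [← hrefl]
    rw [Polynomial.coeff_reflect]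
  rw [h1, Polynomial.revAt_le (by omega)]
  have h2 : L * m - (m * L - 1) = 1 := by omega
  rw [h2]
  exact geomP_pow_coeff_one L m hL hm

/-- The inclusion–exclusion sum at `n = mℓ - 1` equals `m`. -/
theorem stmt_8 (m ℓ : ℕ) (hm : 1 ≤ m) (hℓ : 1 ≤ ℓ) :
    ∑ i ∈ Finset.range ((m * ℓ - 1) / (ℓ + 1) + 1),
        (-1 : ℤ) ^ i * (m.choose i : ℤ)
          * ((m + m * ℓ - i * (ℓ + 1) - 2).choose (m * ℓ - i * (ℓ + 1) - 1) : ℤ)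
      = m := by
  have hmL : 1 ≤ m * ℓ := Nat.mul_le_mul hm hℓ
  set n := m * ℓ - 1 with hn
  set L := ℓ + 1 with hLdef
  set D := n / L with hDdef
  set P : ℤ[X] := ∑ k ∈ range (ℓ + 1), Polynomial.X ^ k with hP
  set g : ℤ⟦X⟧ := (PowerSeries.invOneSubPow ℤ m).val with hg
  set F : ℕ → ℤ := fun i => (-1 : ℤ) ^ i * (m.choose i : ℤ) *
      (if i * L ≤ n then (((m - 1) + (n - i * L)).choose (m - 1) : ℤ) else 0) with hF
  have hmLmul : m * L = m * ℓ + m := by ring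
  -- key identity P * (1-X) = 1 - X^L as power series
  have hpoly : P * (1 - Polynomial.X) = 1 - Polynomial.X ^ L := by
    have h := geom_sum_mul (Polynomial.X : ℤ[X]) L
    rw [hP, hLdef]
    linear_combination -h
  have hkey : (P : ℤ⟦X⟧) * (1 - PowerSeries.X) = 1 - PowerSeries.X ^ L := by
    have h3 := congrArg (Polynomial.coeToPowerSeries.ringHom (R := ℤ)) hpoly
    simpa only [map_mul, map_sub, map_one, map_pow,
      Polynomial.coeToPowerSeries.ringHom_apply, Polynomial.coe_X] using h3
  have h5 : ((1 - PowerSeries.X : ℤ⟦X⟧) ^ m) * g = 1 := by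
    rw [hg, ← PowerSeries.invOneSubPow_inv_eq_one_sub_pow ℤ m]
    exact (PowerSeries.invOneSubPow ℤ m).inv_val
  have hmain : ((P : ℤ⟦X⟧)) ^ m = (1 - PowerSeries.X ^ L) ^ m * g := by
    have h4 : ((P : ℤ⟦X⟧)) ^ m * (((1 - PowerSeries.X) ^ m) * g)
        = (1 - PowerSeries.X ^ L) ^ m * g := by
      rw [← mul_assoc, ← mul_pow, hkey]
    rwa [h5, mul_one] at h4
  have hgc : ∀ k, PowerSeries.coeff k g = (((m - 1) + k).choose (m - 1) : ℤ) := by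
    intro k
    rw [hg, PowerSeries.invOneSubPow_val_eq_mk_sub_one_add_choose_of_pos ℤ m hm,
      PowerSeries.coeff_mk]
  -- binomial expansion
  have hbin := add_pow (-(PowerSeries.X ^ L : ℤ⟦X⟧)) 1 m
  rw [neg_add_eq_sub] at hbin
  simp only [one_pow, mul_one] at hbin
  have hcoeff : PowerSeries.coeff n ((1 - PowerSeries.X ^ L) ^ m * g)
      = ∑ i ∈ range (m + 1), F i := by
    rw [hbin, Finset.sum_mul, map_sum]
    refine Finset.sum_congr rfl fun i _ => ?_
    have hterm : (-(PowerSeries.X ^ L : ℤ⟦X⟧)) ^ i * (m.choose i : ℤ⟦X⟧) * g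
        = PowerSeries.C ((-1 : ℤ) ^ i * (m.choose i : ℤ)) * (PowerSeries.X ^ (i * L) * g) := by
      rw [neg_pow, ← pow_mul, mul_comm L i]
      simp only [map_mul, map_pow, map_neg, map_one, map_natCast]
      ring
    rw [hterm, PowerSeries.coeff_C_mul, PowerSeries.coeff_X_pow_mul']
    simp only [hF]
    split_ifs with h
    · rw [hgc]
    · simp
  -- the statement sum matches the truncated sum of F
  have hstep : ∀ i ∈ range (D + 1),
      (-1 : ℤ) ^ i * (m.choose i : ℤ)
          * ((m + m * ℓ - i * L - 2).choose (m * ℓ - i * L - 1) : ℤ) = F i := by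
    intro i hi
    have hi' : i ≤ D := by
      rw [Finset.mem_range] at hi; omega
    have hiL : i * L ≤ n := (Nat.le_div_iff_mul_le (by omega)).mp hi'
    simp only [hF, if_pos hiL]
    have htop : m + m * ℓ - i * L - 2 = (m - 1) + (n - i * L) := by omega
    have hbot : m * ℓ - i * L - 1 = n - i * L := by omega
    rw [htop, hbot, Nat.choose_symm_add]
  have hDm : D ≤ m := by
    have : n / L < m := (Nat.div_lt_iff_lt_mul (by omega)).mpr (by omega)
    omega
  have hsub : ∑ i ∈ range (D + 1), F i = ∑ i ∈ range (m + 1), F i := by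
    apply Finset.sum_subset
    · exact Finset.range_subset_range.mpr (by omega)
    · intro i hi hni
      rw [Finset.mem_range] at hi hni
      have hDi : D < i := by omega
      have hlt : n < i * L := by
        by_contra h
        push_neg at h
        exact absurd ((Nat.le_div_iff_mul_le (by omega)).mpr h) (by omega)
      rw [hF]
      simp only [if_neg (by omega : ¬ i * L ≤ n), mul_zero]
  calc ∑ i ∈ range (D + 1),
        (-1 : ℤ) ^ i * (m.choose i : ℤ)
          * ((m + m * ℓ - i * L - 2).choose (m * ℓ - i * L - 1) : ℤ)
      = ∑ i ∈ range (D + 1), F i := Finset.sum_congr rfl hstep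
    _ = ∑ i ∈ range (m + 1), F i := hsub
    _ = PowerSeries.coeff n ((1 - PowerSeries.X ^ L) ^ m * g) := hcoeff.symm
    _ = PowerSeries.coeff n ((P : ℤ⟦X⟧) ^ m) := by rw [hmain]
    _ = (P ^ m).coeff n := by rw [← Polynomial.coe_pow, Polynomial.coeff_coe]
    _ = m := by
        rw [hn, hP]
        exact geomP_pow_coeff_top ℓ m hℓ hm
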